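/- In a delegative simple game, for any pair of voters i,j with d(i)=j (i delegates directly to j), the delegative Banzhaf measure satisfies DB_i ≤ DB_j. -/

import Mathlib

open Finset
open scoped Classical

/-- Total weight of voters in `C` whose entire delegation chain (the iterates of `d`)
stays inside `C` (the "active" voters). -/
noncomputable def gamma {V : Type*} [Fintype V] (w : V → ℕ) (d : V → V) (C : Finset V) : ℕ :=
  ∑ i ∈ C, if ∀ k : ℕ, d^[k] i ∈ C then w i else 0

/-- A coalition wins iff its active weight meets the quota. -/
def wins {V : Type*} [Fintype V] (w : V → ℕ) (d : V → V) (q : ℕ) (C : Finset V) : Prop :=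
  q ≤ gamma w d C

/-- Voter `i` is a swing agent for coalition `C`. -/
noncomputable def swing {V : Type*} [Fintype V] (w : V → ℕ) (d : V → V) (q : ℕ)
    (i : V) (C : Finset V) : Prop :=
  ¬ wins w d q C ∧ wins w d q (insert i C)

/-- Number of coalitions `C ⊆ V \ {i}` for which `i` is a swing agent. -/
noncomputable def swingCount {V : Type*} [Fintype V] (w : V → ℕ) (d : V → V) (q : ℕ)
    (i : V) : ℕ :=
  (((univ : Finset V).erase i).powerset.filter (fun C => swing w d q i C)).card

/-- Delegative Banzhaf measure. -/
noncomputable def DB {V : Type*} [Fintype V] (w : V → ℕ) (d : V → V) (q : ℕ) (i : V) : ℚ :=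
  (swingCount w d q i : ℚ) / 2 ^ (Fintype.card V - 1)

/-- Delegative Shapley-Shubik index. -/
noncomputable def DS {V : Type*} [Fintype V] (w : V → ℕ) (d : V → V) (q : ℕ) (i : V) : ℚ :=
  ∑ C ∈ ((univ : Finset V).erase i).powerset,
    if swing w d q i C then
      (Nat.factorial C.card * Nat.factorial (Fintype.card V - C.card - 1) : ℚ) /
        Nat.factorial (Fintype.card V)
    else 0

lemma gamma_mono {V : Type*} [Fintype V] (w : V → ℕ) (d : V → V) {C D : Finset V}
    (h : C ⊆ D) : gamma w d C ≤ gamma w d D := by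
  unfold gamma
  calc ∑ v ∈ C, (if ∀ k : ℕ, d^[k] v ∈ C then w v else 0)
      ≤ ∑ v ∈ C, (if ∀ k : ℕ, d^[k] v ∈ D then w v else 0) := by
        apply Finset.sum_le_sum
        intro v _
        split_ifs with h1 h2
        · exact le_rfl
        · exact absurd (fun k => h (h1 k)) h2
        · exact Nat.zero_le _
        · exact le_rfl
    _ ≤ ∑ v ∈ D, (if ∀ k : ℕ, d^[k] v ∈ D then w v else 0) :=
        Finset.sum_le_sum_of_subset h

/-- If `i ∉ C` and `j = d i ∉ insert i C`, inserting `i` cannot increase gamma. -/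
lemma gamma_insert_le {V : Type*} [Fintype V] (w : V → ℕ) (d : V → V) {i j : V}
    (hij : d i = j) {C : Finset V} (hiC : i ∉ C) (hj : j ∉ insert i C) :
    gamma w d (insert i C) ≤ gamma w d C := by
  have hchain : ∀ v ∈ C, (∀ k : ℕ, d^[k] v ∈ insert i C) → ∀ k : ℕ, d^[k] v ∈ C := by
    intro v hv hall k
    have h1 := hall k
    rcases Finset.mem_insert.mp h1 with h | h
    · exfalso
      have := hall (k + 1)
      rw [Function.iterate_succ_apply', h, hij] at this
      exact hj this
    · exact h
  unfold gamma
  rw [Finset.sum_insert hiC]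
  have h0 : (if ∀ k : ℕ, d^[k] i ∈ insert i C then w i else 0) = 0 := by
    rw [if_neg]
    intro hall
    have := hall 1
    simp only [Function.iterate_one, hij] at this
    exact hj this
  rw [h0, zero_add]
  apply Finset.sum_le_sum
  intro v hv
  split_ifs with h1 h2
  · exact le_rfl
  · exact absurd (hchain v hv h1) h2
  · exact Nat.zero_le _
  · exact le_rfl

lemma swing_mem {V : Type*} [Fintype V] (w : V → ℕ) (d : V → V) (q : ℕ) {i j : V}
    (hij : d i = j) {C : Finset V} (hiC : i ∉ C) (hsw : swing w d q i C) :
    j ∈ insert i C := by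
  by_contra hj
  exact hsw.1 (le_trans hsw.2 (gamma_insert_le w d hij hiC hj))

lemma swing_transfer {V : Type*} [Fintype V] (w : V → ℕ) (d : V → V) (q : ℕ) {i j : V}
    (hij : d i = j) (hne : i ≠ j) {C : Finset V} (hiC : i ∉ C) (hjC : j ∈ C)
    (hsw : swing w d q i C) :
    swing w d q j (insert i (C.erase j)) := by
  constructor
  · intro hw
    apply hsw.1
    refine le_trans hw ?_
    have h1 : gamma w d (insert i (C.erase j)) ≤ gamma w d (C.erase j) := by
      apply gamma_insert_le w d hij (fun h => hiC (Finset.mem_of_mem_erase h))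
      simp [Ne.symm hne]
    exact le_trans h1 (gamma_mono w d (Finset.erase_subset _ _))
  · have : insert j (insert i (C.erase j)) = insert i C := by
      ext x
      simp only [Finset.mem_insert, Finset.mem_erase]
      constructor
      · rintro (rfl | rfl | ⟨_, hx⟩) <;> tauto
      · rintro (rfl | hx)
        · tauto
        · by_cases hxj : x = j <;> tauto
    rw [this]
    exact hsw.2

theorem stmt7 {V : Type*} [Fintype V] (w : V → ℕ) (q : ℕ) (d : V → V)
    (hacyc : ∀ v, ∃ k, d (d^[k] v) = d^[k] v)
    (i j : V) (hij : d i = j) :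
    DB w d q i ≤ DB w d q j := by
  by_cases hne : i = j
  · subst hne; exact le_rfl
  have hcount : swingCount w d q i ≤ swingCount w d q j := by
    unfold swingCount
    apply Finset.card_le_card_of_injOn (fun C => insert i (C.erase j))
    · intro C hC
      change C ∈ (((univ : Finset V).erase i).powerset.filter (fun C => swing w d q i C)) at hC
      simp only [Finset.mem_coe, Finset.mem_filter, Finset.mem_powerset] at hC ⊢
      obtain ⟨hsub, hsw⟩ := hC
      have hiC : i ∉ C := fun h => (Finset.mem_erase.mp (hsub h)).1 rfl
      have hjC : j ∈ C := by
        rcases Finset.mem_insert.mp (swing_mem w d q hij hiC hsw) with h | h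
        · exact absurd h.symm hne
        · exact h
      refine ⟨?_, swing_transfer w d q hij hne hiC hjC hsw⟩
      intro x hx
      rcases Finset.mem_insert.mp hx with rfl | hx
      · exact Finset.mem_erase.mpr ⟨hne, Finset.mem_univ _⟩
      · exact Finset.mem_erase.mpr ⟨(Finset.mem_erase.mp hx).1, Finset.mem_univ _⟩
    · intro C1 h1 C2 h2 heq
      simp only [Finset.mem_coe, Finset.mem_filter, Finset.mem_powerset] at h1 h2
      have hi1 : i ∉ C1 := fun h => (Finset.mem_erase.mp (h1.1 h)).1 rfl
      have hi2 : i ∉ C2 := fun h => (Finset.mem_erase.mp (h2.1 h)).1 rfl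
      have hj1 : j ∈ C1 := by
        rcases Finset.mem_insert.mp (swing_mem w d q hij hi1 h1.2) with h | h
        · exact absurd h.symm hne
        · exact h
      have hj2 : j ∈ C2 := by
        rcases Finset.mem_insert.mp (swing_mem w d q hij hi2 h2.2) with h | h
        · exact absurd h.symm hne
        · exact h
      have hi1' : i ∉ C1.erase j := fun h => hi1 (Finset.mem_of_mem_erase h)
      have hi2' : i ∉ C2.erase j := fun h => hi2 (Finset.mem_of_mem_erase h)
      have he : C1.erase j = C2.erase j := by
        rw [← Finset.erase_insert hi1', ← Finset.erase_insert hi2']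
        exact congrArg (fun S => S.erase i) heq
      rw [← Finset.insert_erase hj1, he, Finset.insert_erase hj2]
  unfold DB
  have h2 : (0:ℚ) < 2 ^ (Fintype.card V - 1) := by positivity
  exact div_le_div_of_nonneg_right (by exact_mod_cast hcount) h2.le
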